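/- Let k ≥ 1 and 0 ≤ ℓ ≤ k be integers and let G = (V,E) be a (k,ℓ)-sparse hypergraph. Then the components of G are pairwise vertex-disjoint: if C₁ and C₂ are distinct components of G, then C₁ ∩ C₂ = ∅. -/
import Mathlib


/-- The number of edges of the multiset `E` spanned by the vertex set `W`. -/
def spanCount {V : Type*} [DecidableEq V] (E : Multiset (Finset V)) (W : Finset V) : ℕ :=
  (E.filter fun e => e ⊆ W).card

/-- A hypergraph with edge multiset `E` is `(k,ℓ)`-sparse if every vertex subset spanning
at least one edge spans at most `k|W| - ℓ` edges. -/
def Sparse {V : Type*} [DecidableEq V] (k l : ℕ) (E : Multiset (Finset V)) : Prop :=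
  ∀ W : Finset V, 1 ≤ spanCount E W → spanCount E W + l ≤ k * W.card

/-- A block of a sparse hypergraph: a vertex subset spanning at least one edge and
spanning exactly `k|W| - ℓ` edges. -/
def IsBlock {V : Type*} [DecidableEq V] (k l : ℕ) (E : Multiset (Finset V)) (W : Finset V) :
    Prop :=
  1 ≤ spanCount E W ∧ spanCount E W + l = k * W.card

/-- A component: an inclusion-maximal block. -/
def IsComponent {V : Type*} [DecidableEq V] (k l : ℕ) (E : Multiset (Finset V))
    (W : Finset V) : Prop :=
  IsBlock k l E W ∧ ∀ W' : Finset V, IsBlock k l E W' → W ⊆ W' → W' = W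

/-- If `0 ≤ ℓ ≤ k`, the components of a `(k,ℓ)`-sparse hypergraph are pairwise
vertex-disjoint. -/
theorem stmt_7 {V : Type*} [DecidableEq V] (k l : ℕ) (hk : 1 ≤ k) (hl : l ≤ k)
    (E : Multiset (Finset V)) (hne : ∀ e ∈ E, e.Nonempty) (hsp : Sparse k l E)
    (C₁ C₂ : Finset V) (hC₁ : IsComponent k l E C₁) (hC₂ : IsComponent k l E C₂)
    (hdistinct : C₁ ≠ C₂) :
    C₁ ∩ C₂ = ∅ := by
  by_contra h
  -- monotonicity of spanCount
  have mono : ∀ W W' : Finset V, W ⊆ W' → spanCount E W ≤ spanCount E W' := by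
    intro W W' hWW'
    exact Multiset.card_le_card (Multiset.monotone_filter_right E
      (fun e he => he.trans hWW'))
  -- submodular-type inequality
  have key : spanCount E C₁ + spanCount E C₂ ≤
      spanCount E (C₁ ∪ C₂) + spanCount E (C₁ ∩ C₂) := by
    unfold spanCount
    rw [← Multiset.card_add, ← Multiset.card_add, Multiset.filter_add_filter]
    simp only [Multiset.card_add]
    refine Nat.add_le_add ?_ ?_
    · exact Multiset.card_le_card (Multiset.monotone_filter_right E
        (fun e he => by
          rcases he with he | he
          · exact he.trans Finset.subset_union_left
          · exact he.trans Finset.subset_union_right))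
    · exact Multiset.card_le_card (Multiset.monotone_filter_right E
        (fun e he => Finset.subset_inter he.1 he.2))
  set a := spanCount E C₁ with ha
  set b := spanCount E C₂ with hb
  set i := spanCount E (C₁ ∩ C₂) with hi
  set u := spanCount E (C₁ ∪ C₂) with hu
  have hcard : (C₁ ∪ C₂).card + (C₁ ∩ C₂).card = C₁.card + C₂.card :=
    Finset.card_union_add_card_inter C₁ C₂
  have hinter_pos : 1 ≤ (C₁ ∩ C₂).card :=
    Finset.card_pos.mpr (Finset.nonempty_iff_ne_empty.mpr h)
  have hki : l + i ≤ k * (C₁ ∩ C₂).card := by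
    rcases Nat.eq_zero_or_pos i with h0 | hpos
    · rw [h0]
      calc l + 0 = l := by omega
        _ ≤ k := hl
        _ ≤ k * (C₁ ∩ C₂).card := Nat.le_mul_of_pos_right k hinter_pos
    · have := hsp (C₁ ∩ C₂) hpos
      omega
  have hub : a ≤ u := mono C₁ (C₁ ∪ C₂) Finset.subset_union_left
  have ha1 : 1 ≤ a := hC₁.1.1
  have hb1 : b + l = k * C₂.card := hC₂.1.2
  have ha2 : a + l = k * C₁.card := hC₁.1.2
  have hspU : u + l ≤ k * (C₁ ∪ C₂).card := hsp (C₁ ∪ C₂) (le_trans ha1 hub)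
  have hkmul : k * (C₁ ∪ C₂).card + k * (C₁ ∩ C₂).card = k * C₁.card + k * C₂.card := by
    rw [← Nat.mul_add, hcard, Nat.mul_add]
  have hUblock : IsBlock k l E (C₁ ∪ C₂) := by
    refine ⟨le_trans ha1 hub, ?_⟩
    omega
  have e1 := hC₁.2 (C₁ ∪ C₂) hUblock Finset.subset_union_left
  have e2 := hC₂.2 (C₁ ∪ C₂) hUblock Finset.subset_union_right
  exact hdistinct (e1.symm.trans e2)
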